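/- The graph Γ = Cay(V,S₂) has an order 2 automorphism that interchanges only non-adjacent vertices: there exists a graph automorphism φ of Γ with φ ∘ φ = id and φ ≠ id such that for every v ∈ V with φ(v) ≠ v, the vertices v and φ(v) are not adjacent in Γ. -/

import Mathlib

open SimpleGraph Polynomial Matrix

/-- `V` is the 5-dimensional vector space over `GF(3)`. -/
abbrev V : Type := Fin 5 → ZMod 3

/-- The specific parity-check matrix of the ternary Golay code. -/
def H : Matrix (Fin 5) (Fin 11) (ZMod 3) :=
  !![1,1,1,2,2,0,1,0,0,0,0;
     1,1,2,1,0,2,0,1,0,0,0;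
     1,2,1,0,1,2,0,0,1,0,0;
     1,2,0,1,2,1,0,0,0,1,0;
     1,0,2,2,1,1,0,0,0,0,1]

/-- `S₂ = {±x₁, …, ±x₁₁}` where `x₁, …, x₁₁` are the columns of `H`. -/
def S2 : Set V := {v | ∃ j : Fin 11, v = (fun i => H i j) ∨ v = -(fun i => H i j)}

instance : DecidablePred (· ∈ S2) := fun v =>
  decidable_of_iff (∃ j : Fin 11, v = (fun i => H i j) ∨ v = -(fun i => H i j)) Iff.rfl

/-- The reversal map sending `(a,b,c,d,e)` to `(e,d,c,b,a)`. -/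
def r (v : V) : V := fun i => v i.rev

/-- The Berlekamp–Van Lint–Seidel graph `Γ = Cay(V, S₂)`:
`u` is adjacent to `v` iff `u ≠ v` and `u - v ∈ S₂`. -/
def Γ : SimpleGraph V where
  Adj u v := u ≠ v ∧ u - v ∈ S2
  symm := ⟨by
    rintro u v ⟨hne, j, hj⟩
    refine ⟨hne.symm, j, ?_⟩
    rcases hj with h | h
    · right; rw [← neg_sub, h]
    · left; rw [← neg_sub, h, neg_neg]⟩
  loopless := ⟨fun v h => h.1 rfl⟩

instance : DecidableRel Γ.Adj := fun u v =>
  decidable_of_iff (u ≠ v ∧ u - v ∈ S2) Iff.rfl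


lemma r_r (v : V) : r (r v) = v := by
  funext i; simp [r, Fin.rev_rev]

lemma r_sub (u v : V) : r u - r v = r (u - v) := rfl

set_option maxRecDepth 10000 in
lemma r_mem_S2 : ∀ w : V, w ∈ S2 → r w ∈ S2 := by decide

lemma r_mem_S2_iff (w : V) : r w ∈ S2 ↔ w ∈ S2 :=
  ⟨fun h => (r_r w) ▸ r_mem_S2 _ h, r_mem_S2 w⟩

set_option maxRecDepth 10000 in
lemma no_antipal : ∀ w : V, w ∈ S2 → r w ≠ -w := by decide

def rEquiv : V ≃ V := ⟨r, r, r_r, r_r⟩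

/-- `Γ` has an order 2 automorphism that interchanges only non-adjacent vertices. -/
theorem exists_order_two_automorphism_interchanging_only_nonadjacent :
    ∃ φ : Γ ≃g Γ, (⇑φ ∘ ⇑φ = id) ∧ (⇑φ ≠ id) ∧
      (∀ v : V, φ v ≠ v → ¬ Γ.Adj v (φ v)) := by
  refine ⟨⟨rEquiv, ?_⟩, ?_, ?_, ?_⟩
  · intro u v
    show Γ.Adj (r u) (r v) ↔ Γ.Adj u v
    constructor
    · rintro ⟨h1, h2⟩
      refine ⟨fun h => h1 (by rw [h]), ?_⟩
      rw [r_sub, r_mem_S2_iff] at h2; exact h2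
    · rintro ⟨h1, h2⟩
      refine ⟨fun h => h1 (by rw [← r_r u, ← r_r v, h]), ?_⟩
      rw [r_sub, r_mem_S2_iff]; exact h2
  · funext v; exact r_r v
  · intro h
    have := congrFun h (fun i => (i : ZMod 3))
    have h0 : r (fun i : Fin 5 => (i : ZMod 3)) 0 = (0 : Fin 5) := by
      exact congrFun this 0
    have : ((4 : Fin 5) : ZMod 3) = (0 : Fin 5) := h0
    revert this; decide
  · rintro v hne ⟨h1, h2⟩
    have := no_antipal _ h2
    apply this
    show r (v - r v) = -(v - r v)
    rw [← r_sub, r_r]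
    abel
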